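/- Let a finite rooted tree with layer function l be given. Then for every vertex v, the number of leaves that are descendants of v is at least 2^{l(v)}. Consequently, if the tree has n vertices, then l(v) ≤ log₂ n for every vertex v, so the layer function takes at most ⌊log₂ n⌋ + 1 distinct values. -/

import Mathlib

/-- A finite rooted tree: a finite vertex type, a root, and a parent map fixing
the root, such that every vertex reaches the root by iterating the parent map. -/
structure FinRootedTree (V : Type*) where
  root : V
  parent : V → V
  parent_root : parent root = root
  reaches_root : ∀ v : V, ∃ n : ℕ, parent^[n] v = root

variable {V : Type*} [Fintype V] [DecidableEq V]

/-- The children of `v`: the vertices other than the root whose parent is `v`. -/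
def FinRootedTree.children (T : FinRootedTree V) (v : V) : Finset V :=
  Finset.univ.filter fun u => u ≠ T.root ∧ T.parent u = v

/-- `l` is a layer function: leaves have layer `0`, and a non-leaf `v` has layer equal to
the maximum `M` of the layers of its children if exactly one child attains `M`, and
`M + 1` otherwise. -/
def FinRootedTree.IsLayerFun (T : FinRootedTree V) (l : V → ℕ) : Prop :=
  (∀ v : V, T.children v = ∅ → l v = 0) ∧
  ∀ (v : V) (h : (T.children v).Nonempty),
    l v = if ((T.children v).filter fun c => l c = (T.children v).sup' h l).card = 1
      then (T.children v).sup' h l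
      else (T.children v).sup' h l + 1

noncomputable def FinRootedTree.depth (T : FinRootedTree V) (v : V) : ℕ :=
  Nat.find (T.reaches_root v)

lemma FinRootedTree.depth_spec (T : FinRootedTree V) (v : V) :
    T.parent^[T.depth v] v = T.root := Nat.find_spec (T.reaches_root v)

lemma FinRootedTree.depth_pos (T : FinRootedTree V) {v : V} (h : v ≠ T.root) :
    0 < T.depth v := by
  rcases Nat.eq_zero_or_pos (T.depth v) with h0 | h1
  · have := T.depth_spec v
    rw [h0] at this
    exact absurd this h
  · exact h1

lemma FinRootedTree.depth_parent_lt (T : FinRootedTree V) {v : V} (h : v ≠ T.root) :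
    T.depth (T.parent v) < T.depth v := by
  have hp := T.depth_pos h
  have hs := T.depth_spec v
  have : T.parent^[T.depth v - 1] (T.parent v) = T.root := by
    rw [← Function.iterate_succ_apply, Nat.succ_eq_add_one, Nat.sub_add_cancel hp]
    exact hs
  have h2 : T.depth (T.parent v) ≤ T.depth v - 1 :=
    Nat.find_min' (T.reaches_root (T.parent v)) this
  omega

lemma FinRootedTree.depth_parent_le (T : FinRootedTree V) (v : V) :
    T.depth (T.parent v) ≤ T.depth v := by
  by_cases h : v = T.root
  · rw [h, T.parent_root]
  · exact (T.depth_parent_lt h).le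

lemma FinRootedTree.depth_iterate_le (T : FinRootedTree V) (v : V) (n : ℕ) :
    T.depth (T.parent^[n] v) ≤ T.depth v := by
  induction n with
  | zero => simp
  | succ n ih =>
    rw [Function.iterate_succ_apply']
    exact (T.depth_parent_le _).trans ih

lemma FinRootedTree.depth_child (T : FinRootedTree V) {v c : V} (hc : c ∈ T.children v) :
    T.depth c = T.depth v + 1 := by
  simp only [FinRootedTree.children, Finset.mem_filter] at hc
  obtain ⟨-, hne, hp⟩ := hc
  have h1 : T.depth c ≤ T.depth v + 1 := by
    have : T.parent^[T.depth v + 1] c = T.root := by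
      rw [Function.iterate_succ_apply, hp]; exact T.depth_spec v
    exact Nat.find_min' (T.reaches_root c) this
  have h2 : T.depth v < T.depth c := by
    have := T.depth_parent_lt hne
    rwa [hp] at this
  omega

open Classical in
noncomputable def FinRootedTree.descF (T : FinRootedTree V) (v : V) : Finset V :=
  Finset.univ.filter fun u => ∃ n, T.parent^[n] u = v

open Classical in
noncomputable def FinRootedTree.leafF (T : FinRootedTree V) (v : V) : Finset V :=
  Finset.univ.filter fun u => (∃ n, T.parent^[n] u = v) ∧ T.children u = ∅

lemma FinRootedTree.self_mem_descF (T : FinRootedTree V) (v : V) : v ∈ T.descF v := by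
  simp [FinRootedTree.descF]; exact ⟨0, rfl⟩

lemma FinRootedTree.descF_child_subset (T : FinRootedTree V) {v c : V}
    (hc : c ∈ T.children v) : T.descF c ⊆ T.descF v := by
  simp only [FinRootedTree.children, Finset.mem_filter] at hc
  obtain ⟨-, -, hp⟩ := hc
  intro u hu
  simp only [FinRootedTree.descF, Finset.mem_filter, Finset.mem_univ, true_and] at hu ⊢
  obtain ⟨n, hn⟩ := hu
  exact ⟨n + 1, by rw [Function.iterate_succ_apply', hn, hp]⟩

lemma FinRootedTree.not_mem_descF_child (T : FinRootedTree V) {v c : V}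
    (hc : c ∈ T.children v) : v ∉ T.descF c := by
  intro hv
  simp only [FinRootedTree.descF, Finset.mem_filter, Finset.mem_univ, true_and] at hv
  obtain ⟨n, hn⟩ := hv
  have h1 : T.depth (T.parent^[n] v) ≤ T.depth v := T.depth_iterate_le v n
  rw [hn, T.depth_child hc] at h1
  omega

lemma FinRootedTree.leafF_subset_descF (T : FinRootedTree V) (v : V) :
    T.leafF v ⊆ T.descF v := by
  intro u hu
  simp only [FinRootedTree.leafF, FinRootedTree.descF, Finset.mem_filter] at hu ⊢
  tauto

lemma FinRootedTree.leafF_child_subset (T : FinRootedTree V) {v c : V}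
    (hc : c ∈ T.children v) : T.leafF c ⊆ T.leafF v := by
  intro u hu
  simp only [FinRootedTree.leafF, Finset.mem_filter, Finset.mem_univ, true_and] at hu ⊢
  refine ⟨?_, hu.2⟩
  have := T.descF_child_subset hc
  have hm : u ∈ T.descF c := by
    simp [FinRootedTree.descF, hu.1]
  have := this hm
  simpa [FinRootedTree.descF] using this

lemma FinRootedTree.descF_disjoint (T : FinRootedTree V) {v c₁ c₂ : V}
    (h1 : c₁ ∈ T.children v) (h2 : c₂ ∈ T.children v) (hne : c₁ ≠ c₂) :
    Disjoint (T.descF c₁) (T.descF c₂) := by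
  rw [Finset.disjoint_left]
  intro u hu1 hu2
  simp only [FinRootedTree.descF, Finset.mem_filter, Finset.mem_univ, true_and] at hu1 hu2
  obtain ⟨n, hn⟩ := hu1
  obtain ⟨m, hm⟩ := hu2
  -- wlog n ≤ m
  have key : ∀ (a b : V) (p q : ℕ), a ∈ T.children v → b ∈ T.children v → a ≠ b →
      p ≤ q → T.parent^[p] u = a → T.parent^[q] u = b → False := by
    intro a b p q ha hb hab hpq hp hq
    have hq' : T.parent^[q - p] a = b := by
      rw [← hp, ← Function.iterate_add_apply, Nat.sub_add_cancel hpq]; exact hq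
    rcases Nat.eq_zero_or_pos (q - p) with h0 | hpos
    · rw [h0] at hq'; exact hab hq'
    · have haroot : a ≠ T.root := by
        simp only [FinRootedTree.children, Finset.mem_filter] at ha; tauto
      have : T.parent^[q - p - 1] (T.parent a) = b := by
        rw [← Function.iterate_succ_apply, Nat.succ_eq_add_one, Nat.sub_add_cancel hpos]
        exact hq'
      have hle : T.depth b ≤ T.depth (T.parent a) := by
        rw [← this]; exact T.depth_iterate_le _ _
      have hlt := T.depth_parent_lt haroot
      rw [T.depth_child ha, T.depth_child hb] at *
      omega
  rcases le_total n m with h | h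
  · exact key c₁ c₂ n m h1 h2 hne h hn hm
  · exact key c₂ c₁ m n h2 h1 hne.symm h hm hn

lemma FinRootedTree.key (T : FinRootedTree V) (l : V → ℕ) (hl : T.IsLayerFun l) :
    ∀ N : ℕ, ∀ v : V, (T.descF v).card ≤ N → 2 ^ l v ≤ (T.leafF v).card := by
  intro N
  induction N with
  | zero =>
    intro v hv
    have := Finset.card_pos.2 ⟨v, T.self_mem_descF v⟩
    omega
  | succ N ih =>
    intro v hv
    by_cases hc : T.children v = ∅
    · rw [hl.1 v hc, pow_zero]
      refine Finset.card_pos.2 ⟨v, ?_⟩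
      simp only [FinRootedTree.leafF, Finset.mem_filter, Finset.mem_univ, true_and]
      exact ⟨⟨0, rfl⟩, hc⟩
    · have hne : (T.children v).Nonempty := Finset.nonempty_iff_ne_empty.2 hc
      set M := (T.children v).sup' hne l with hM
      have hstep : ∀ c ∈ T.children v, (T.descF c).card ≤ N := by
        intro c hcmem
        have hss : T.descF c ⊂ T.descF v :=
          ⟨T.descF_child_subset hcmem, fun hsub =>
            T.not_mem_descF_child hcmem (hsub (T.self_mem_descF v))⟩
        have := Finset.card_lt_card hss
        omega
      obtain ⟨c₀, hc₀mem, hc₀⟩ := Finset.exists_mem_eq_sup' hne l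
      have hlv := hl.2 v hne
      by_cases hcard : ((T.children v).filter fun c => l c = M).card = 1
      · rw [hlv, if_pos hcard, hc₀]
        calc 2 ^ l c₀ ≤ (T.leafF c₀).card := ih c₀ (hstep c₀ hc₀mem)
          _ ≤ (T.leafF v).card := Finset.card_le_card (T.leafF_child_subset hc₀mem)
      · rw [hlv, if_neg hcard, ← hM]
        have h1 : 1 < ((T.children v).filter fun c => l c = M).card := by
          have hpos : 0 < ((T.children v).filter fun c => l c = M).card :=
            Finset.card_pos.2 ⟨c₀, Finset.mem_filter.2 ⟨hc₀mem, hc₀.symm⟩⟩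
          omega
        obtain ⟨c₁, hc₁, c₂, hc₂, hc12⟩ := Finset.one_lt_card.1 h1
        rw [Finset.mem_filter] at hc₁ hc₂
        have hdis : Disjoint (T.leafF c₁) (T.leafF c₂) :=
          Finset.disjoint_of_subset_left (T.leafF_subset_descF c₁)
            (Finset.disjoint_of_subset_right (T.leafF_subset_descF c₂)
              (T.descF_disjoint hc₁.1 hc₂.1 hc12))
        calc 2 ^ (M + 1) = 2 ^ M + 2 ^ M := by ring
          _ ≤ (T.leafF c₁).card + (T.leafF c₂).card := by
              have e1 := ih c₁ (hstep c₁ hc₁.1)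
              have e2 := ih c₂ (hstep c₂ hc₂.1)
              rw [hc₁.2] at e1
              rw [hc₂.2] at e2
              omega
          _ = (T.leafF c₁ ∪ T.leafF c₂).card := (Finset.card_union_of_disjoint hdis).symm
          _ ≤ (T.leafF v).card := Finset.card_le_card (Finset.union_subset
              (T.leafF_child_subset hc₁.1) (T.leafF_child_subset hc₂.1))

/-- For a layer function `l` on a finite rooted tree, every vertex `v` has at least
`2 ^ (l v)` leaf descendants. Consequently `l v ≤ log₂ n` for a tree on `n` vertices,
so `l` takes at most `⌊log₂ n⌋ + 1` distinct values. -/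
theorem stmt14 (T : FinRootedTree V) (l : V → ℕ) (hl : T.IsLayerFun l) :
    (∀ v : V,
      2 ^ l v ≤ Set.ncard {u : V | (∃ n : ℕ, T.parent^[n] u = v) ∧ T.children u = ∅}) ∧
    (∀ v : V, l v ≤ Nat.log 2 (Fintype.card V)) ∧
    (Finset.univ.image l).card ≤ Nat.log 2 (Fintype.card V) + 1 := by
  have h1 : ∀ v : V,
      2 ^ l v ≤ Set.ncard {u : V | (∃ n : ℕ, T.parent^[n] u = v) ∧ T.children u = ∅} := by
    intro v
    have hset : {u : V | (∃ n : ℕ, T.parent^[n] u = v) ∧ T.children u = ∅}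
        = ↑(T.leafF v) := by
      ext u; simp [FinRootedTree.leafF]
    rw [hset, Set.ncard_coe_finset]
    exact T.key l hl _ v le_rfl
  have h2 : ∀ v : V, l v ≤ Nat.log 2 (Fintype.card V) := by
    intro v
    have : Nonempty V := ⟨v⟩
    have hcard : Fintype.card V ≠ 0 := Fintype.card_ne_zero
    have hle : 2 ^ l v ≤ Fintype.card V := by
      have := h1 v
      have hsub : Set.ncard {u : V | (∃ n : ℕ, T.parent^[n] u = v) ∧ T.children u = ∅}
          ≤ Fintype.card V := by
        have h := Set.ncard_le_ncard
          (Set.subset_univ {u : V | (∃ n : ℕ, T.parent^[n] u = v) ∧ T.children u = ∅})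
          (Set.toFinite _)
        rwa [Set.ncard_univ, Nat.card_eq_fintype_card] at h
      omega
    exact (Nat.le_log_iff_pow_le one_lt_two hcard).2 hle
  refine ⟨h1, h2, ?_⟩
  have hsub : Finset.univ.image l ⊆ Finset.range (Nat.log 2 (Fintype.card V) + 1) := by
    intro m hm
    simp only [Finset.mem_image] at hm
    obtain ⟨v, -, rfl⟩ := hm
    exact Finset.mem_range.2 (Nat.lt_succ_of_le (h2 v))
  calc (Finset.univ.image l).card ≤ _ := Finset.card_le_card hsub
    _ = _ := Finset.card_range _
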